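/- There exists a constant K < ∞ (depending only on β and ε) such that for every sequence ε'_n of positive reals satisfying 1/α(ε) − 1 − (log ε'_n)/(n·β·β_c(ε)) > 0 for all n, for all sufficiently large n one has E[ 2^{εn}·c_n^{−1}·τ_n(x)·1{ c_n^{−1} τ_n(x) ≤ ε'_n } ] ≤ K · (ε'_n)^{ 1 − α_n(ε) − (log ε'_n)/(2nβ²) } / ( 1/α(ε) − 1 − (log ε'_n)/(n β β_c(ε)) ), where α_n(ε) = (nβ²)^{−1} log c_n. -/

import Mathlib

open MeasureTheory ProbabilityTheory Filter Real

noncomputable section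

open Set
open scoped NNReal ENNReal

section AuxTailLemmas

lemma gauss_integrable {n : ℝ} (hn : 0 < n) :
    Integrable (fun v : ℝ => rexp (-v ^ 2 / (2 * n))) := by
  have h : (fun v : ℝ => rexp (-v ^ 2 / (2 * n))) = fun v => rexp (-((2 * n)⁻¹) * v ^ 2) := by
    funext v; congr 1; field_simp
  rw [h]
  exact integrable_exp_neg_mul_sq (by positivity)

lemma gauss_tendsto_zero {n : ℝ} (hn : 0 < n) :
    Tendsto (fun v : ℝ => rexp (-v ^ 2 / (2 * n))) atTop (nhds 0) := by
  have h1 : Tendsto (fun v : ℝ => -v ^ 2 / (2 * n)) atTop atBot := by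
    apply Tendsto.atBot_div_const (by positivity)
    exact tendsto_neg_atBot_iff.mpr (tendsto_pow_atTop two_ne_zero)
  exact Real.tendsto_exp_atBot.comp h1

lemma gauss_hasDeriv {n : ℝ} (hn : 0 < n) (v : ℝ) :
    HasDerivAt (fun v : ℝ => rexp (-v ^ 2 / (2 * n)))
      (-(v / n) * rexp (-v ^ 2 / (2 * n))) v := by
  have h1 : HasDerivAt (fun v : ℝ => -v ^ 2 / (2 * n)) (-(2 * v ^ 1) / (2 * n)) v :=
    ((hasDerivAt_pow 2 v).neg).div_const (2 * n)
  have h2 := h1.exp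
  convert h2 using 1
  field_simp

lemma tail_upper {n t : ℝ} (hn : 0 < n) (ht : 0 < t) :
    ∫ v in Ioi t, rexp (-v ^ 2 / (2 * n)) ≤ n / t * rexp (-t ^ 2 / (2 * n)) := by
  set g : ℝ → ℝ := fun v => -(n / t) * rexp (-v ^ 2 / (2 * n)) with hg
  set g' : ℝ → ℝ := fun v => v / t * rexp (-v ^ 2 / (2 * n)) with hg'
  have hderiv : ∀ v ∈ Ioi t, HasDerivAt g (g' v) v := by
    intro v _
    have := (gauss_hasDeriv hn v).const_mul (-(n / t))
    refine this.congr_deriv ?_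
    simp only [hg']
    field_simp
  have hcont : ContinuousWithinAt g (Ici t) t := by
    apply Continuous.continuousWithinAt
    exact (continuous_const.mul ((continuous_pow 2).neg.div_const _).rexp)
  have hpos : ∀ v ∈ Ioi t, 0 ≤ g' v := by
    intro v hv
    have : 0 < v := ht.trans hv
    positivity
  have htend : Tendsto g atTop (nhds 0) := by
    have := (gauss_tendsto_zero hn).const_mul (-(n / t))
    simp only [hg, neg_mul]
    simpa using this
  have hint : IntegrableOn g' (Ioi t) :=
    integrableOn_Ioi_deriv_of_nonneg hcont hderiv hpos htend
  have hFTC : ∫ v in Ioi t, g' v = 0 - g t :=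
    integral_Ioi_of_hasDerivAt_of_tendsto hcont hderiv hint htend
  have hmono : ∫ v in Ioi t, rexp (-v ^ 2 / (2 * n)) ≤ ∫ v in Ioi t, g' v := by
    apply setIntegral_mono_on (gauss_integrable hn).integrableOn hint measurableSet_Ioi
    intro v hv
    have h1 : 1 ≤ v / t := (one_le_div ht).2 (le_of_lt hv)
    simp only [hg']
    nlinarith [exp_pos (-v ^ 2 / (2 * n))]
  calc ∫ v in Ioi t, rexp (-v ^ 2 / (2 * n)) ≤ ∫ v in Ioi t, g' v := hmono
    _ = 0 - g t := hFTC
    _ = n / t * rexp (-t ^ 2 / (2 * n)) := by simp only [hg]; ring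

lemma tail_lower {n s : ℝ} (hn : 0 < n) (hs : 0 ≤ s) :
    n * s / (s ^ 2 + n) * rexp (-s ^ 2 / (2 * n)) ≤ ∫ v in Ioi s, rexp (-v ^ 2 / (2 * n)) := by
  set g : ℝ → ℝ := fun v => -(n * v / (v ^ 2 + n)) * rexp (-v ^ 2 / (2 * n)) with hg
  set g' : ℝ → ℝ := fun v =>
    (v ^ 4 + 2 * n * v ^ 2 - n ^ 2) / (v ^ 2 + n) ^ 2 * rexp (-v ^ 2 / (2 * n)) with hg'
  have hne : ∀ v : ℝ, v ^ 2 + n ≠ 0 := fun v => by positivity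
  have hderiv : ∀ v : ℝ, HasDerivAt g (g' v) v := by
    intro v
    have h1 := ((hasDerivAt_id v).const_mul n).div
        ((hasDerivAt_pow 2 v).add_const n) (hne v)
    simp only [id_eq] at h1
    have h2 := (h1.neg).mul (gauss_hasDeriv hn v)
    refine h2.congr_deriv ?_
    simp only [hg', Pi.neg_apply, Pi.div_apply]
    field_simp
    ring
  have hcont : ∀ v : ℝ, ContinuousAt g v := fun v => (hderiv v).continuousAt
  have hbound : ∀ v : ℝ, |g' v| ≤ rexp (-v ^ 2 / (2 * n)) := by
    intro v
    simp only [hg', abs_mul, abs_of_pos (exp_pos _)]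
    have h1 : |(v ^ 4 + 2 * n * v ^ 2 - n ^ 2) / (v ^ 2 + n) ^ 2| ≤ 1 := by
      rw [abs_div, abs_of_pos (by positivity : (0:ℝ) < (v ^ 2 + n) ^ 2), div_le_one (by positivity)]
      rw [abs_le]
      constructor <;> nlinarith [sq_nonneg v, sq_nonneg (v^2)]
    nlinarith [exp_pos (-v ^ 2 / (2 * n)), abs_nonneg ((v ^ 4 + 2 * n * v ^ 2 - n ^ 2) / (v ^ 2 + n) ^ 2)]
  have hint : IntegrableOn g' (Ioi s) := by
    apply Integrable.integrableOn
    apply Integrable.mono (gauss_integrable hn)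
    · apply Continuous.aestronglyMeasurable
      apply Continuous.mul
      · exact (by continuity : Continuous fun v : ℝ => (v ^ 4 + 2 * n * v ^ 2 - n ^ 2)).div
          (by continuity) (fun v => by positivity)
      · exact ((continuous_pow 2).neg.div_const _).rexp
    · refine ae_of_all _ fun v => ?_
      rw [norm_eq_abs, norm_eq_abs, abs_of_pos (exp_pos _)]
      exact hbound v
  have htend : Tendsto g atTop (nhds 0) := by
    apply squeeze_zero_norm' (a := fun v => (n / (2 * Real.sqrt n)) * rexp (-v ^ 2 / (2 * n)))
    · filter_upwards [eventually_ge_atTop (0:ℝ)] with v hv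
      simp only [hg, norm_eq_abs, abs_mul, abs_neg, abs_of_pos (exp_pos _)]
      have hsq : Real.sqrt n ^ 2 = n := Real.sq_sqrt hn.le
      have hsqpos : 0 < Real.sqrt n := Real.sqrt_pos.2 hn
      have h2 : |n * v / (v ^ 2 + n)| ≤ n / (2 * Real.sqrt n) := by
        rw [abs_div, abs_of_nonneg (by positivity : (0:ℝ) ≤ n * v),
          abs_of_pos (by positivity : (0:ℝ) < v ^ 2 + n),
          div_le_div_iff₀ (by positivity) (by positivity)]
        nlinarith [sq_nonneg (v - Real.sqrt n), sq_nonneg v]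
      nlinarith [exp_pos (-v ^ 2 / (2 * n)), abs_nonneg (n * v / (v ^ 2 + n))]
    · have := (gauss_tendsto_zero hn).const_mul (n / (2 * Real.sqrt n))
      simpa using this
  have hFTC : ∫ v in Ioi s, g' v = 0 - g s :=
    integral_Ioi_of_hasDerivAt_of_tendsto (hcont s).continuousWithinAt
      (fun v _ => hderiv v) hint htend
  have hmono : ∫ v in Ioi s, g' v ≤ ∫ v in Ioi s, rexp (-v ^ 2 / (2 * n)) := by
    apply setIntegral_mono_on hint (gauss_integrable hn).integrableOn measurableSet_Ioi
    intro v _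
    have := hbound v
    have := abs_le.1 this
    exact this.2
  calc n * s / (s ^ 2 + n) * rexp (-s ^ 2 / (2 * n)) = 0 - g s := by simp only [hg]; ring
    _ = ∫ v in Ioi s, g' v := hFTC.symm
    _ ≤ _ := hmono

lemma shift_Ioi (f : ℝ → ℝ) (b m : ℝ) :
    ∫ v in Ioi b, f (v + m) = ∫ v in Ioi (b + m), f v := by
  rw [← integral_indicator measurableSet_Ioi, ← integral_indicator measurableSet_Ioi]
  rw [← integral_add_right_eq_self (Set.indicator (Ioi (b + m)) f) m]
  congr 1
  funext v
  by_cases h : b < v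
  · simp [Set.indicator_apply, mem_Ioi, h, add_lt_add_iff_right]
  · simp [Set.indicator_apply, mem_Ioi, h, add_lt_add_iff_right]

end AuxTailLemmas

set_option maxHeartbeats 2000000 in
theorem truncated_first_moment_bound
    {Ω : Type*} [MeasurableSpace Ω] (P : Measure Ω) [IsProbabilityMeasure P]
    (H : (n : ℕ) → (Fin n → Bool) → Ω → ℝ)
    (hmeas : ∀ n x, Measurable (H n x))
    (hgauss : ∀ n x, Measure.map (H n x) P = gaussianReal 0 n)
    (hindep : iIndepFun
      (fun p : (Σ n : ℕ, (Fin n → Bool)) => H p.1 p.2) P)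
    (β : ℝ) (hβ : 0 < β)
    (ε : ℝ) (hε0 : 0 < ε) (hε1 : ε < 1)
    (c : ℕ → ℝ)
    (hc : ∀ n, 1 ≤ n → ∀ x : Fin n → Bool, 0 < c n ∧
      (2 : ℝ) ^ (ε * n) * (P {ω | c n ≤ Real.exp (-β * H n x ω)}).toReal = 1) :
    ∃ K : ℝ, ∀ εp : ℕ → ℝ, (∀ n, 0 < εp n) →
      (∀ n, 1 ≤ n → 0 < β / Real.sqrt (2 * ε * Real.log 2) - 1 -
          Real.log (εp n) / (n * β * Real.sqrt (2 * ε * Real.log 2))) →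
      ∀ᶠ n : ℕ in atTop, ∀ x : Fin n → Bool,
        (∫ ω, (if (c n)⁻¹ * Real.exp (-β * H n x ω) ≤ εp n then
            (2 : ℝ) ^ (ε * n) * ((c n)⁻¹ * Real.exp (-β * H n x ω)) else 0) ∂P)
          ≤ K * (εp n) ^ (1 - Real.log (c n) / (n * β ^ 2) -
                Real.log (εp n) / (2 * n * β ^ 2)) /
              (β / Real.sqrt (2 * ε * Real.log 2) - 1 -
                Real.log (εp n) / (n * β * Real.sqrt (2 * ε * Real.log 2))) := by
  have hlog2 : 0 < Real.log 2 := Real.log_pos one_lt_two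
  have hπ : 0 < π := Real.pi_pos
  have h2π : (1:ℝ) ≤ 2 * π := by nlinarith [Real.pi_gt_three]
  set βc : ℝ := Real.sqrt (2 * ε * Real.log 2) with hβcdef
  have hβc : 0 < βc := Real.sqrt_pos.2 (by positivity)
  have hβcsq : βc ^ 2 = 2 * ε * Real.log 2 := Real.sq_sqrt (by positivity)
  refine ⟨(βc + 1) / βc, ?_⟩
  intro εp hεp hD
  set c₀ : ℝ := rexp (-(1/2)) / (2 * Real.sqrt (2 * π)) with hc₀def
  have hc₀pos : 0 < c₀ := by positivity
  have hsmall : ∀ᶠ n : ℕ in atTop, (2:ℝ) ^ (-(ε * (n:ℝ))) < c₀ := by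
    have h0 : (0:ℝ) ≤ (2:ℝ) ^ (-ε) := (rpow_pos_of_pos two_pos _).le
    have h1 : Tendsto (fun n : ℕ => ((2:ℝ) ^ (-ε)) ^ n) atTop (nhds 0) :=
      tendsto_pow_atTop_nhds_zero_of_lt_one h0
        (rpow_lt_one_of_one_lt_of_neg one_lt_two (neg_neg_of_pos hε0))
    filter_upwards [h1.eventually (eventually_lt_nhds hc₀pos)] with n hn
    calc (2:ℝ) ^ (-(ε * (n:ℝ))) = ((2:ℝ) ^ (-ε)) ^ (n:ℕ) := by
          rw [← Real.rpow_natCast ((2:ℝ) ^ (-ε)) n, ← Real.rpow_mul (by norm_num)]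
          ring_nf
      _ < c₀ := hn
  filter_upwards [eventually_ge_atTop 1, hsmall] with n hn1 hns
  intro x
  have hn0 : (0:ℝ) < n := by exact_mod_cast Nat.pos_of_ne_zero (by omega)
  have hv : (n : ℝ≥0) ≠ 0 := Nat.cast_ne_zero.mpr (by omega)
  obtain ⟨hcpos, hctail⟩ := hc n hn1 x
  have hεpn : 0 < εp n := hεp n
  have hDn := hD n hn1
  set L := Real.log (c n) with hL
  set M := Real.log (εp n) with hM
  set s : ℝ := L / β with hs
  set b : ℝ := -(L + M) / β with hbdef
  set t : ℝ := b + β * n with htdef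
  set D : ℝ := β / βc - 1 - M / (n * β * βc) with hDdef
  -- the gaussian tail at s
  have hsqn : (0:ℝ) < 2 * π * (n:ℝ) := by positivity
  have hsqrt : 0 < Real.sqrt (2 * π * (n:ℝ)) := Real.sqrt_pos.2 hsqn
  have hset : {ω | c n ≤ Real.exp (-β * H n x ω)} = H n x ⁻¹' (Iic (-s)) := by
    ext ω
    simp only [Set.mem_setOf_eq, Set.mem_preimage, Set.mem_Iic]
    rw [← Real.exp_log hcpos, Real.exp_le_exp, ← hL]
    rw [hs, ← neg_div, le_div_iff₀ hβ]
    constructor <;> intro <;> linarith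
  have hPtail : (P {ω | c n ≤ Real.exp (-β * H n x ω)}).toReal
      = ∫ v in Iic (-s), gaussianPDFReal 0 (n : ℝ≥0) v := by
    rw [hset, ← Measure.map_apply (hmeas n x) measurableSet_Iic, hgauss n x,
      gaussianReal_apply_eq_integral 0 hv, ENNReal.toReal_ofReal
        (integral_nonneg (fun v => gaussianPDFReal_nonneg _ _ _))]
  have hpdf : ∀ v : ℝ, gaussianPDFReal 0 (n : ℝ≥0) v
      = (Real.sqrt (2 * π * (n:ℝ)))⁻¹ * rexp (-v ^ 2 / (2 * (n:ℝ))) := by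
    intro v
    simp only [gaussianPDFReal, sub_zero, NNReal.coe_natCast]
  have hΦ : ∫ v in Ioi s, rexp (-v ^ 2 / (2 * (n:ℝ)))
      = Real.sqrt (2 * π * (n:ℝ)) * (2:ℝ) ^ (-(ε * (n:ℝ))) := by
    have hsym : ∫ v in Iic (-s), gaussianPDFReal 0 (n : ℝ≥0) v
        = ∫ v in Ioi s, gaussianPDFReal 0 (n : ℝ≥0) v := by
      have := integral_comp_neg_Iic (-s) (gaussianPDFReal 0 (n : ℝ≥0))
      rw [neg_neg] at this
      rw [← this]
      refine setIntegral_congr_fun measurableSet_Iic (fun v _ => ?_)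
      rw [hpdf, hpdf, neg_sq]
    have h2 : ∫ v in Ioi s, gaussianPDFReal 0 (n : ℝ≥0) v
        = (Real.sqrt (2 * π * (n:ℝ)))⁻¹ * ∫ v in Ioi s, rexp (-v ^ 2 / (2 * (n:ℝ))) := by
      simp_rw [hpdf]
      rw [integral_const_mul]
    have h3 : (2:ℝ) ^ (ε * (n:ℝ)) *
        ((Real.sqrt (2 * π * (n:ℝ)))⁻¹ * ∫ v in Ioi s, rexp (-v ^ 2 / (2 * (n:ℝ)))) = 1 := by
      rw [← h2, ← hsym, ← hPtail]; exact hctail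
    have h6 : (Real.sqrt (2 * π * (n:ℝ)))⁻¹ * ∫ v in Ioi s, rexp (-v ^ 2 / (2 * (n:ℝ)))
        = ((2:ℝ) ^ (ε * (n:ℝ)))⁻¹ := eq_inv_of_mul_eq_one_right h3
    rw [← Real.rpow_neg (by norm_num : (0:ℝ) ≤ 2)] at h6
    calc ∫ v in Ioi s, rexp (-v ^ 2 / (2 * (n:ℝ)))
        = Real.sqrt (2 * π * (n:ℝ)) *
          ((Real.sqrt (2 * π * (n:ℝ)))⁻¹ * ∫ v in Ioi s, rexp (-v ^ 2 / (2 * (n:ℝ)))) := by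
          rw [← mul_assoc, mul_inv_cancel₀ (ne_of_gt hsqrt), one_mul]
      _ = Real.sqrt (2 * π * (n:ℝ)) * (2:ℝ) ^ (-(ε * (n:ℝ))) := by rw [h6]
  have hX0 : (0:ℝ) < (2:ℝ) ^ (-(ε * (n:ℝ))) := rpow_pos_of_pos two_pos _
  have hsqrtn : (0:ℝ) < Real.sqrt n := Real.sqrt_pos.2 hn0
  have hsqn' : Real.sqrt (n:ℝ) ^ 2 = (n:ℝ) := Real.sq_sqrt hn0.le
  have hsplit : Real.sqrt (2 * π * (n:ℝ)) = Real.sqrt (2 * π) * Real.sqrt (n:ℝ) :=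
    Real.sqrt_mul (by positivity) _
  have hsqrt2π : (1:ℝ) ≤ Real.sqrt (2 * π) := by
    rw [show (1:ℝ) = Real.sqrt 1 from (Real.sqrt_one).symm]
    exact Real.sqrt_le_sqrt (by nlinarith [Real.pi_gt_three])
  -- (A) : sqrt n ≤ s
  have hsn : Real.sqrt (n:ℝ) ≤ s := by
    by_contra hcon
    push_neg at hcon
    have h1 : ∫ v in Ioi (Real.sqrt (n:ℝ)), rexp (-v ^ 2 / (2 * (n:ℝ)))
        ≤ ∫ v in Ioi s, rexp (-v ^ 2 / (2 * (n:ℝ))) := by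
      apply setIntegral_mono_set (gauss_integrable hn0).integrableOn
        (ae_of_all _ fun v => (exp_pos _).le)
      exact HasSubset.Subset.eventuallyLE (Ioi_subset_Ioi hcon.le)
    have h2 := tail_lower hn0 (Real.sqrt_nonneg (n:ℝ))
    have h3 : (n:ℝ) * Real.sqrt n / (Real.sqrt (n:ℝ) ^ 2 + n) = Real.sqrt (n:ℝ) / 2 := by
      rw [hsqn', show (n:ℝ) + (n:ℝ) = 2 * (n:ℝ) from by ring, mul_comm (2:ℝ) ((n:ℝ)),
        ← div_div, mul_div_cancel_left₀ _ (ne_of_gt hn0)]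
    have h4 : -Real.sqrt (n:ℝ) ^ 2 / (2 * (n:ℝ)) = -(1/2) := by
      rw [hsqn', neg_div]
      congr 1
      rw [div_eq_div_iff (ne_of_gt (by positivity : (0:ℝ) < 2 * (n:ℝ)))
        (two_ne_zero)]
      ring
    rw [h3, h4] at h2
    rw [hΦ, hsplit] at h1
    -- so  √n/2 * rexp(-(1/2)) ≤ √(2π) * √n * X
    have h5 : Real.sqrt (n:ℝ) / 2 * rexp (-(1/2))
        ≤ Real.sqrt (2*π) * Real.sqrt (n:ℝ) * (2:ℝ) ^ (-(ε * (n:ℝ))) := by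
      calc Real.sqrt (n:ℝ) / 2 * rexp (-(1/2)) ≤ _ := le_trans h2 h1
        _ = Real.sqrt (2*π) * Real.sqrt (n:ℝ) * (2:ℝ) ^ (-(ε * (n:ℝ))) := by ring
    have h6 : rexp (-(1/2)) / 2 ≤ Real.sqrt (2*π) * (2:ℝ) ^ (-(ε * (n:ℝ))) := by
      have hmul := mul_le_mul_of_nonneg_left h5 (le_of_lt (inv_pos.2 hsqrtn))
      have hinv : (Real.sqrt (n:ℝ))⁻¹ * Real.sqrt (n:ℝ) = 1 := inv_mul_cancel₀ (ne_of_gt hsqrtn)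
      calc rexp (-(1/2)) / 2
          = (Real.sqrt (n:ℝ))⁻¹ * (Real.sqrt (n:ℝ) / 2 * rexp (-(1/2))) := by
            rw [show (Real.sqrt (n:ℝ))⁻¹ * (Real.sqrt (n:ℝ) / 2 * rexp (-(1/2)))
              = ((Real.sqrt (n:ℝ))⁻¹ * Real.sqrt (n:ℝ)) * (rexp (-(1/2)) / 2) from by ring,
              hinv, one_mul]
        _ ≤ (Real.sqrt (n:ℝ))⁻¹ * (Real.sqrt (2*π) * Real.sqrt (n:ℝ) * (2:ℝ) ^ (-(ε * (n:ℝ)))) := hmul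
        _ = Real.sqrt (2*π) * (2:ℝ) ^ (-(ε * (n:ℝ))) := by
            rw [show (Real.sqrt (n:ℝ))⁻¹ * (Real.sqrt (2*π) * Real.sqrt (n:ℝ) * (2:ℝ) ^ (-(ε * (n:ℝ))))
              = ((Real.sqrt (n:ℝ))⁻¹ * Real.sqrt (n:ℝ)) * (Real.sqrt (2*π) * (2:ℝ) ^ (-(ε * (n:ℝ)))) from by ring,
              hinv, one_mul]
    have h7 : c₀ ≤ (2:ℝ) ^ (-(ε * (n:ℝ))) := by
      rw [hc₀def, div_le_iff₀ (by positivity)]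
      calc rexp (-(1/2)) = 2 * (rexp (-(1/2)) / 2) := by ring
        _ ≤ 2 * (Real.sqrt (2*π) * (2:ℝ) ^ (-(ε * (n:ℝ)))) := by linarith
        _ = (2:ℝ) ^ (-(ε * (n:ℝ))) * (2 * Real.sqrt (2*π)) := by ring
    exact absurd hns (not_lt.2 h7)
  have hspos : 0 < s := lt_of_lt_of_le hsqrtn hsn
  have hsn1 : (1:ℝ) ≤ Real.sqrt (n:ℝ) := by
    rw [show (1:ℝ) = Real.sqrt 1 from (Real.sqrt_one).symm]
    exact Real.sqrt_le_sqrt (by exact_mod_cast hn1)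
  -- (D) : s ≤ n * βc
  have hsle : s ≤ (n:ℝ) * βc := by
    have h1 := tail_upper hn0 hspos
    rw [hΦ] at h1
    -- √(2πn) * X ≤ n/s e^{-s²/2n};  and  √n ≤ √(2πn),  n/s ≤ √n
    have h2 : (n:ℝ) / s ≤ Real.sqrt (n:ℝ) := by
      rw [div_le_iff₀ hspos]
      calc (n:ℝ) = Real.sqrt (n:ℝ) * Real.sqrt (n:ℝ) := (Real.mul_self_sqrt hn0.le).symm
        _ ≤ Real.sqrt (n:ℝ) * s := mul_le_mul_of_nonneg_left hsn (Real.sqrt_nonneg _)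
    have h3 : Real.sqrt (n:ℝ) ≤ Real.sqrt (2 * π * (n:ℝ)) :=
      Real.sqrt_le_sqrt (le_mul_of_one_le_left hn0.le h2π)
    have h4 : Real.sqrt (n:ℝ) * (2:ℝ) ^ (-(ε * (n:ℝ))) ≤ Real.sqrt (n:ℝ) * rexp (-s ^ 2 / (2 * (n:ℝ))) := by
      calc Real.sqrt (n:ℝ) * (2:ℝ) ^ (-(ε * (n:ℝ)))
          ≤ Real.sqrt (2 * π * (n:ℝ)) * (2:ℝ) ^ (-(ε * (n:ℝ))) :=
            mul_le_mul_of_nonneg_right h3 hX0.le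
        _ ≤ (n:ℝ) / s * rexp (-s ^ 2 / (2 * (n:ℝ))) := h1
        _ ≤ Real.sqrt (n:ℝ) * rexp (-s ^ 2 / (2 * (n:ℝ))) :=
            mul_le_mul_of_nonneg_right h2 (exp_pos _).le
    have h5 : (2:ℝ) ^ (-(ε * (n:ℝ))) ≤ rexp (-s ^ 2 / (2 * (n:ℝ))) :=
      le_of_mul_le_mul_left h4 hsqrtn
    have h6 : rexp (Real.log 2 * (-(ε * (n:ℝ)))) ≤ rexp (-s ^ 2 / (2 * (n:ℝ))) := by
      rwa [← Real.rpow_def_of_pos two_pos]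
    have h7 := Real.exp_le_exp.1 h6
    rw [mul_neg, neg_div] at h7
    have h7' : s ^ 2 / (2 * (n:ℝ)) ≤ ε * (n:ℝ) * Real.log 2 := by
      have h10 := neg_le_neg_iff.1 h7
      calc s ^ 2 / (2 * (n:ℝ)) ≤ Real.log 2 * (ε * (n:ℝ)) := h10
        _ = ε * (n:ℝ) * Real.log 2 := by ring
    have h8 : s ^ 2 ≤ ((n:ℝ) * βc) ^ 2 := by
      have h9 := (div_le_iff₀ (by positivity : (0:ℝ) < 2 * (n:ℝ))).1 h7'
      calc s ^ 2 ≤ ε * (n:ℝ) * Real.log 2 * (2 * (n:ℝ)) := h9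
        _ = ((n:ℝ) * βc) ^ 2 := by rw [mul_pow, hβcsq]; ring
    calc s = Real.sqrt (s ^ 2) := (Real.sqrt_sq hspos.le).symm
      _ ≤ Real.sqrt (((n:ℝ) * βc) ^ 2) := Real.sqrt_le_sqrt h8
      _ = (n:ℝ) * βc := Real.sqrt_sq (by positivity)
  -- t lower bound
  have htlb : (n:ℝ) * βc * D ≤ t := by
    have h1 : (n:ℝ) * βc * D = (n:ℝ) * β - (n:ℝ) * βc - M / β := by
      rw [hDdef]; field_simp
    have h2 : t = (n:ℝ) * β - s - M / β := by
      rw [htdef, hbdef, hs]; field_simp; ring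
    rw [h1, h2]; linarith
  have htpos : 0 < t := lt_of_lt_of_le (by positivity) htlb
  -- (ii) key multiplicative bound
  have hfrac : (s ^ 2 + (n:ℝ)) / ((n:ℝ) * s) ≤ βc + 1 := by
    rw [div_le_iff₀ (by positivity)]
    have h1 : s ^ 2 ≤ βc * ((n:ℝ) * s) := by nlinarith
    have h2 : (n:ℝ) ≤ (n:ℝ) * s := by nlinarith [le_trans hsn1 hsn]
    nlinarith
  have hkey : (2:ℝ) ^ (ε * (n:ℝ))
      ≤ Real.sqrt (2 * π * (n:ℝ)) * (βc + 1) * rexp (s ^ 2 / (2 * (n:ℝ))) := by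
    have h1 := tail_lower hn0 hspos.le
    rw [hΦ] at h1
    have h4 : (2:ℝ) ^ (ε * (n:ℝ)) * (2:ℝ) ^ (-(ε * (n:ℝ))) = 1 := by
      rw [← Real.rpow_add two_pos]; simp
    have hee : rexp (-s ^ 2 / (2 * (n:ℝ))) * rexp (s ^ 2 / (2 * (n:ℝ))) = 1 := by
      rw [← Real.exp_add, show -s ^ 2 / (2 * (n:ℝ)) + s ^ 2 / (2 * (n:ℝ)) = 0 from by ring,
        Real.exp_zero]
    have h1' : (n:ℝ) * s / (s ^ 2 + (n:ℝ))
        ≤ Real.sqrt (2 * π * (n:ℝ)) * (2:ℝ) ^ (-(ε * (n:ℝ))) * rexp (s ^ 2 / (2 * (n:ℝ))) := by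
      have h5 := mul_le_mul_of_nonneg_right h1 (exp_pos (s ^ 2 / (2 * (n:ℝ)))).le
      rwa [mul_assoc, hee, mul_one] at h5
    have h2 : (2:ℝ) ^ (ε * (n:ℝ)) * ((n:ℝ) * s / (s ^ 2 + (n:ℝ)))
        ≤ Real.sqrt (2 * π * (n:ℝ)) * rexp (s ^ 2 / (2 * (n:ℝ))) := by
      have h5 := mul_le_mul_of_nonneg_left h1'
        (by positivity : (0:ℝ) ≤ (2:ℝ) ^ (ε * (n:ℝ)))
      calc (2:ℝ) ^ (ε * (n:ℝ)) * ((n:ℝ) * s / (s ^ 2 + (n:ℝ)))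
          ≤ (2:ℝ) ^ (ε * (n:ℝ)) *
            (Real.sqrt (2 * π * (n:ℝ)) * (2:ℝ) ^ (-(ε * (n:ℝ))) * rexp (s ^ 2 / (2 * (n:ℝ)))) := h5
        _ = Real.sqrt (2 * π * (n:ℝ)) * rexp (s ^ 2 / (2 * (n:ℝ))) *
            ((2:ℝ) ^ (ε * (n:ℝ)) * (2:ℝ) ^ (-(ε * (n:ℝ)))) := by ring
        _ = Real.sqrt (2 * π * (n:ℝ)) * rexp (s ^ 2 / (2 * (n:ℝ))) := by rw [h4, mul_one]
    calc (2:ℝ) ^ (ε * (n:ℝ))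
        = (2:ℝ) ^ (ε * (n:ℝ)) * ((n:ℝ) * s / (s ^ 2 + (n:ℝ))) * ((s ^ 2 + (n:ℝ)) / ((n:ℝ) * s)) := by
          field_simp
      _ ≤ Real.sqrt (2 * π * (n:ℝ)) * rexp (s ^ 2 / (2 * (n:ℝ))) * (βc + 1) :=
          mul_le_mul h2 hfrac (by positivity) (by positivity)
      _ = Real.sqrt (2 * π * (n:ℝ)) * (βc + 1) * rexp (s ^ 2 / (2 * (n:ℝ))) := by ring
  -- now the integral computation
  set F : ℝ → ℝ := fun u => if (c n)⁻¹ * rexp (-β * u) ≤ εp n then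
      (2:ℝ) ^ (ε * (n:ℝ)) * ((c n)⁻¹ * rexp (-β * u)) else 0 with hF
  have hcond : ∀ u : ℝ, ((c n)⁻¹ * rexp (-β * u) ≤ εp n) ↔ b ≤ u := by
    intro u
    rw [show (c n)⁻¹ * rexp (-β * u) = rexp (-β * u) / c n from by ring,
      div_le_iff₀ hcpos, ← Real.exp_log (by positivity : 0 < εp n * c n), Real.exp_le_exp,
      Real.log_mul (ne_of_gt hεpn) (ne_of_gt hcpos), ← hM, ← hL, hbdef, div_le_iff₀ hβ]
    constructor <;> intro <;> linarith
  have hFmeas : Measurable F := by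
    apply Measurable.ite _ _ measurable_const
    · have hsets : {u : ℝ | (c n)⁻¹ * rexp (-β * u) ≤ εp n} = Ici b := by
        ext u; simpa using hcond u
      rw [show {a : ℝ | (c n)⁻¹ * rexp (-β * a) ≤ εp n} = Ici b from hsets]
      exact measurableSet_Ici
    · fun_prop
  set C : ℝ := (2:ℝ) ^ (ε * (n:ℝ)) * (c n)⁻¹ * (Real.sqrt (2 * π * (n:ℝ)))⁻¹ *
      rexp (β ^ 2 * (n:ℝ) / 2) with hC
  have hCpos : 0 < C := by positivity
  have key : (∫ ω, F (H n x ω) ∂P) = C * ∫ v in Ioi t, rexp (-v ^ 2 / (2 * (n:ℝ))) := by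
    have step1 : (∫ ω, F (H n x ω) ∂P) = ∫ u, F u ∂(gaussianReal 0 (n : ℝ≥0)) := by
      rw [← hgauss n x]
      exact (integral_map (hmeas n x).aemeasurable hFmeas.aestronglyMeasurable).symm
    have step2 : (∫ u, F u ∂(gaussianReal 0 (n : ℝ≥0)))
        = ∫ u, gaussianPDFReal 0 (n : ℝ≥0) u * F u := by
      rw [gaussianReal_of_var_ne_zero 0 hv]
      rw [show (gaussianPDF 0 (n:ℝ≥0)) = (fun u => ((Real.toNNReal
        (gaussianPDFReal 0 (n:ℝ≥0) u) : ℝ≥0) : ℝ≥0∞)) from rfl]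
      rw [integral_withDensity_eq_integral_smul
        ((measurable_gaussianPDFReal 0 (n:ℝ≥0)).real_toNNReal) F]
      congr 1
      funext u
      rw [NNReal.smul_def, smul_eq_mul, Real.coe_toNNReal _ (gaussianPDFReal_nonneg _ _ _)]
    have step3 : (fun u => gaussianPDFReal 0 (n : ℝ≥0) u * F u)
        = Set.indicator (Ici b) (fun u => C * rexp (-(u + β * (n:ℝ)) ^ 2 / (2 * (n:ℝ)))) := by
      funext u
      by_cases hu : b ≤ u
      · rw [Set.indicator_of_mem (mem_Ici.2 hu), hF]
        simp only
        rw [if_pos ((hcond u).2 hu)]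
        have hexp : rexp (-u ^ 2 / (2 * (n:ℝ))) * rexp (-β * u)
            = rexp (β ^ 2 * (n:ℝ) / 2) * rexp (-(u + β * (n:ℝ)) ^ 2 / (2 * (n:ℝ))) := by
          rw [← Real.exp_add, ← Real.exp_add]
          congr 1
          field_simp
          ring
        calc gaussianPDFReal 0 (n:ℝ≥0) u * ((2:ℝ) ^ (ε * (n:ℝ)) * ((c n)⁻¹ * rexp (-β * u)))
            = ((2:ℝ) ^ (ε * (n:ℝ)) * (c n)⁻¹ * (Real.sqrt (2 * π * (n:ℝ)))⁻¹) *
              (rexp (-u ^ 2 / (2 * (n:ℝ))) * rexp (-β * u)) := by rw [hpdf u]; ring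
          _ = ((2:ℝ) ^ (ε * (n:ℝ)) * (c n)⁻¹ * (Real.sqrt (2 * π * (n:ℝ)))⁻¹) *
              (rexp (β ^ 2 * (n:ℝ) / 2) * rexp (-(u + β * (n:ℝ)) ^ 2 / (2 * (n:ℝ)))) := by
              rw [hexp]
          _ = C * rexp (-(u + β * (n:ℝ)) ^ 2 / (2 * (n:ℝ))) := by rw [hC]; ring
      · rw [Set.indicator_of_notMem (fun hmem => hu (mem_Ici.1 hmem)), hF]
        simp only
        rw [if_neg (fun hcc => hu ((hcond u).1 hcc)), mul_zero]
    rw [step1, step2, step3, integral_indicator measurableSet_Ici,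
      integral_Ici_eq_integral_Ioi, integral_const_mul,
      show (fun u : ℝ => rexp (-(u + β * (n:ℝ)) ^ 2 / (2 * (n:ℝ))))
        = (fun u : ℝ => (fun v : ℝ => rexp (-v ^ 2 / (2 * (n:ℝ)))) (u + β * (n:ℝ))) from rfl,
      shift_Ioi (fun v : ℝ => rexp (-v ^ 2 / (2 * (n:ℝ)))) b (β * (n:ℝ)), ← htdef]
  -- final assembly
  set q : ℝ := 1 - L / ((n:ℝ) * β ^ 2) - M / (2 * (n:ℝ) * β ^ 2) with hq
  have hqpow : εp n ^ q = rexp (q * M) := by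
    rw [Real.rpow_def_of_pos hεpn, ← hM, mul_comm]
  have hiden : s ^ 2 / (2 * (n:ℝ)) + β ^ 2 * (n:ℝ) / 2 - t ^ 2 / (2 * (n:ℝ)) = L + q * M := by
    rw [hq, hs, htdef, hbdef]
    field_simp
    ring
  have hCe : C * rexp (-t ^ 2 / (2 * (n:ℝ))) ≤ (βc + 1) * εp n ^ q := by
    have hnn : (0:ℝ) ≤ (c n)⁻¹ * (Real.sqrt (2 * π * (n:ℝ)))⁻¹ *
        rexp (β ^ 2 * (n:ℝ) / 2) * rexp (-t ^ 2 / (2 * (n:ℝ))) := by positivity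
    have h1 := mul_le_mul_of_nonneg_right hkey hnn
    calc C * rexp (-t ^ 2 / (2 * (n:ℝ)))
        = (2:ℝ) ^ (ε * (n:ℝ)) * ((c n)⁻¹ * (Real.sqrt (2 * π * (n:ℝ)))⁻¹ *
          rexp (β ^ 2 * (n:ℝ) / 2) * rexp (-t ^ 2 / (2 * (n:ℝ)))) := by rw [hC]; ring
      _ ≤ Real.sqrt (2 * π * (n:ℝ)) * (βc + 1) * rexp (s ^ 2 / (2 * (n:ℝ))) *
          ((c n)⁻¹ * (Real.sqrt (2 * π * (n:ℝ)))⁻¹ *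
          rexp (β ^ 2 * (n:ℝ) / 2) * rexp (-t ^ 2 / (2 * (n:ℝ)))) := h1
      _ = (βc + 1) * (c n)⁻¹ * (Real.sqrt (2 * π * (n:ℝ)) * (Real.sqrt (2 * π * (n:ℝ)))⁻¹) *
          (rexp (s ^ 2 / (2 * (n:ℝ))) * rexp (β ^ 2 * (n:ℝ) / 2) * rexp (-t ^ 2 / (2 * (n:ℝ)))) := by
          ring
      _ = (βc + 1) * (c n)⁻¹ *
          (rexp (s ^ 2 / (2 * (n:ℝ)) + β ^ 2 * (n:ℝ) / 2 - t ^ 2 / (2 * (n:ℝ)))) := by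
          rw [mul_inv_cancel₀ (ne_of_gt hsqrt), mul_one, ← Real.exp_add, ← Real.exp_add,
            show s ^ 2 / (2 * (n:ℝ)) + β ^ 2 * (n:ℝ) / 2 + -t ^ 2 / (2 * (n:ℝ))
              = s ^ 2 / (2 * (n:ℝ)) + β ^ 2 * (n:ℝ) / 2 - t ^ 2 / (2 * (n:ℝ)) from by ring]
      _ = (βc + 1) * (c n)⁻¹ * (c n * rexp (q * M)) := by
          rw [hiden, Real.exp_add, Real.exp_log hcpos]
      _ = (βc + 1) * ((c n)⁻¹ * c n) * rexp (q * M) := by ring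
      _ = (βc + 1) * εp n ^ q := by
          rw [inv_mul_cancel₀ (ne_of_gt hcpos), mul_one, hqpow]
  have hnt : (n:ℝ) / t ≤ 1 / (βc * D) := by
    rw [div_le_div_iff₀ htpos (by positivity)]
    calc (n:ℝ) * (βc * D) = (n:ℝ) * βc * D := by ring
      _ ≤ t := htlb
      _ = 1 * t := (one_mul t).symm
  calc (∫ ω, (if (c n)⁻¹ * Real.exp (-β * H n x ω) ≤ εp n then
        (2 : ℝ) ^ (ε * (n:ℝ)) * ((c n)⁻¹ * Real.exp (-β * H n x ω)) else 0) ∂P)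
      = C * ∫ v in Ioi t, rexp (-v ^ 2 / (2 * (n:ℝ))) := key
    _ ≤ C * ((n:ℝ) / t * rexp (-t ^ 2 / (2 * (n:ℝ)))) :=
        mul_le_mul_of_nonneg_left (tail_upper hn0 htpos) hCpos.le
    _ = (C * rexp (-t ^ 2 / (2 * (n:ℝ)))) * ((n:ℝ) / t) := by ring
    _ ≤ ((βc + 1) * εp n ^ q) * (1 / (βc * D)) := by
        apply mul_le_mul hCe hnt (by positivity) _
        have : (0:ℝ) < εp n ^ q := rpow_pos_of_pos hεpn q
        positivity
    _ = (βc + 1) / βc * εp n ^ q / D := by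
        field_simp
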